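/- Axiom (R3) (Huntington's law) is independent of the remaining Tarski axioms: on the two-element Boolean algebra {0,1} with its usual join +, define complement as the identity function (-r=r), relative multiplication as Boolean meet (r;s=r∧s), converse as the identity, and 1'=1. Then (R1), (R2), (R4)-(R10) all hold but (R3) fails. -/
import Mathlib


/-- Addition in the independence model for (R3): Boolean join on {0,1}. -/
def add9 (r s : Bool) : Bool := r || s

/-- Complement in the independence model for (R3): the identity function. -/
def compl9 (r : Bool) : Bool := r

/-- Relative multiplication in the independence model for (R3): Boolean meet. -/
def mul9 (r s : Bool) : Bool := r && s

/-- Converse in the independence model for (R3): the identity function. -/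
def conv9 (r : Bool) : Bool := r

/-- The identity constant 1' = 1. -/
def e9 : Bool := true

/-- Axiom (R3) (Huntington's law) is independent of the remaining Tarski axioms:
on the two-element Boolean algebra with complement redefined as the identity,
relative multiplication the meet, converse the identity, and 1'=1, axioms
(R1), (R2), (R4)-(R10) all hold but (R3) fails. -/
theorem R3_independent :
    (∀ r s, add9 r s = add9 s r) ∧
    (∀ r s t, add9 r (add9 s t) = add9 (add9 r s) t) ∧
    (∀ r s t, mul9 r (mul9 s t) = mul9 (mul9 r s) t) ∧
    (∀ r, mul9 r e9 = r) ∧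
    (∀ r, conv9 (conv9 r) = r) ∧
    (∀ r s, conv9 (mul9 r s) = mul9 (conv9 s) (conv9 r)) ∧
    (∀ r s t, mul9 (add9 r s) t = add9 (mul9 r t) (mul9 s t)) ∧
    (∀ r s, conv9 (add9 r s) = add9 (conv9 r) (conv9 s)) ∧
    (∀ r s, add9 (mul9 (conv9 r) (compl9 (mul9 r s))) (compl9 s) = compl9 s) ∧
    ¬ (∀ r s, add9 (compl9 (add9 (compl9 r) s))
        (compl9 (add9 (compl9 r) (compl9 s))) = r) := by
  refine ⟨?_, ?_, ?_, ?_, ?_, ?_, ?_, ?_, ?_, ?_⟩ <;>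
    first
      | (intro h; exact absurd (h false true) (by decide))
      | decide
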